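/- arXiv:2303.15146 — 3 statements merged into one kernel-verified Lean document; each statement's English description precedes it below -/
import Mathlib

section
/- Let A be a complex Banach algebra with identity, let a ∈ A be Hirano invertible, and let b ∈ A be strongly Drazin invertible with strongly Drazin inverse b^D. If b^D a = 0 and b a b^π = 0 (where b^π = 1 − bb^D), then the 2×2 anti-triangular matrix with rows (a, 1) and (b, 0) is Hirano invertible in M₂(A). -/
/-- An element of a ring is *Hirano invertible* if there exists `x` with
`a * x = x * a`, `x = x * a * x`, and `a ^ 2 - a * x` nilpotent. -/
def IsHirano {R : Type*} [Ring R] (a : R) : Prop :=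
  ∃ x : R, a * x = x * a ∧ x = x * a * x ∧ IsNilpotent (a ^ 2 - a * x)

/-- `y` is the *strongly Drazin inverse* of `b`: `b * y = y * b`, `y = y * b * y`,
and `b - b * y` is nilpotent. -/
def IsSDrazinInv {R : Type*} [Ring R] (b y : R) : Prop :=
  b * y = y * b ∧ y = y * b * y ∧ IsNilpotent (b - b * y)

section Helpers

variable {R : Type*} [Ring R]

private lemma pow_rotate (z y : R) : ∀ k : ℕ, (z*y)^(k+1) = z*((y*z)^k)*y := by
  intro k
  induction k with
  | zero => simp
  | succ k ih =>
    rw [pow_succ, ih, pow_succ]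
    noncomm_ring

private lemma isNilpotent_swap {z y : R} (h : IsNilpotent (y*z)) : IsNilpotent (z*y) := by
  obtain ⟨k, hk⟩ := h
  exact ⟨k+1, by rw [pow_rotate, hk, mul_zero, zero_mul]⟩

private lemma isNilpotent_add_of_mul_eq_zero {α β : R} (h : β * α = 0)
    (hα : IsNilpotent α) (hβ : IsNilpotent β) : IsNilpotent (α + β) := by
  obtain ⟨m, hm⟩ := hα
  obtain ⟨n, hn⟩ := hβ
  have key : ∀ k : ℕ, (α+β)^(k+1) = α^(k+1) + (α+β)^k * β := by
    intro k
    induction k with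
    | zero => simp
    | succ k ih =>
      calc (α+β)^(k+1+1) = ((α+β)^(k+1))*(α+β) := pow_succ _ _
        _ = (α^(k+1) + (α+β)^k*β)*(α+β) := by rw [ih]
        _ = α^(k+1)*α + (α^(k+1) + (α+β)^k*β)*β + (α+β)^k*(β*α) := by noncomm_ring
        _ = α^(k+1)*α + ((α+β)^(k+1))*β := by rw [h, mul_zero, add_zero, ← ih]
        _ = α^(k+1+1) + ((α+β)^(k+1))*β := by rw [← pow_succ]
  have top : ∀ j : ℕ, (α+β)^(m+j) = (α+β)^m * β^j := by
    intro j
    induction j with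
    | zero => simp
    | succ j ih =>
      have h1 : m + (j + 1) = (m + j) + 1 := by omega
      have hz : α ^ (m+j+1) = 0 := by
        rw [show m+j+1 = m+(j+1) by omega, pow_add, hm, zero_mul]
      rw [h1, key (m+j), hz, zero_add, ih, pow_succ, mul_assoc]
  exact ⟨m + n, by rw [top n, hn, mul_zero]⟩

private lemma peirce_nilpotent (p q z : R) (hpq : p + q = 1) (hp : p*p = p)
    (hlow : q*z*p = 0)
    (hu : IsNilpotent (p*z*p - (p*z*p)*(p*z*p)))
    (hw : IsNilpotent (q*z*q - (q*z*q)*(q*z*q))) :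
    IsNilpotent (z - z*z) := by
  have hq1 : q = 1 - p := eq_sub_of_add_eq' hpq
  have hqq : q*q = q := by rw [hq1]; noncomm_ring [hp]
  have hqp : q*p = 0 := by rw [hq1]; noncomm_ring [hp]
  have hpq0 : p*q = 0 := by rw [hq1]; noncomm_ring [hp]
  set D := z - z*z with hD
  have hzz : z*z = z*p*z + z*q*z := by
    have h1 : z*(p+q)*z = z*p*z + z*q*z := by noncomm_ring
    rw [hpq] at h1
    simpa using h1
  have hqDp : q*D*p = 0 := by
    have e1 : q*(z*p*z)*p = (q*z*p)*(z*p) := by noncomm_ring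
    have e2 : q*(z*q*z)*p = (q*z)*(q*z*p) := by noncomm_ring
    have : q*D*p = q*z*p - (q*(z*p*z)*p + q*(z*q*z)*p) := by
      rw [hD, hzz]; noncomm_ring
    rw [this, e1, e2, hlow]
    simp
  have hpDp : p*D*p = (p*z*p) - (p*z*p)*(p*z*p) := by
    have e1 : p*(z*q*z)*p = (p*z)*(q*z*p) := by noncomm_ring
    have e2 : p*(z*p*z)*p = (p*z*p)*(z*p) := by noncomm_ring
    have e4 : (p*z*p)*(p*z*p) = (p*z*(p*p))*(z*p) := by noncomm_ring
    rw [hp] at e4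
    have : p*D*p = p*z*p - (p*(z*p*z)*p + p*(z*q*z)*p) := by
      rw [hD, hzz]; noncomm_ring
    rw [this, e1, e2, hlow, mul_zero, add_zero, e4]
  have hqDq : q*D*q = (q*z*q) - (q*z*q)*(q*z*q) := by
    have e1 : q*(z*p*z)*q = (q*z*p)*(z*q) := by noncomm_ring
    have e2 : q*(z*q*z)*q = (q*z*q)*(z*q) := by noncomm_ring
    have e4 : (q*z*q)*(q*z*q) = (q*z*(q*q))*(z*q) := by noncomm_ring
    rw [hqq] at e4
    have : q*D*q = q*z*q - (q*(z*p*z)*q + q*(z*q*z)*q) := by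
      rw [hD, hzz]; noncomm_ring
    rw [this, e1, e2, hlow, zero_mul, zero_add, e4]
  have hsplit : D = p*D*p + p*D*q + q*D*q := by
    have h1 : (p+q)*D*(p+q) = p*D*p + p*D*q + q*D*p + q*D*q := by noncomm_ring
    rw [hpq, one_mul, mul_one] at h1
    rw [hqDp, add_zero] at h1
    exact h1
  have hU : IsNilpotent (p*D*p) := by rw [hpDp]; exact hu
  have hV : IsNilpotent (p*D*q) := by
    refine ⟨2, ?_⟩
    have : (p*D*q)^2 = ((p*D)*(q*p))*(D*q) := by noncomm_ring
    rw [this, hqp, mul_zero, zero_mul]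
  have hVU : (p*D*q)*(p*D*p) = 0 := by
    have : (p*D*q)*(p*D*p) = ((p*D)*(q*p))*(D*p) := by noncomm_ring
    rw [this, hqp, mul_zero, zero_mul]
  have hTop : IsNilpotent (p*D*p + p*D*q) := isNilpotent_add_of_mul_eq_zero hVU hU hV
  have hW : IsNilpotent (q*D*q) := by rw [hqDq]; exact hw
  have hWTop : (q*D*q)*(p*D*p + p*D*q) = 0 := by
    have e1 : (q*D*q)*(p*D*p) = ((q*D)*(q*p))*(D*p) := by noncomm_ring
    have e2 : (q*D*q)*(p*D*q) = ((q*D)*(q*p))*(D*q) := by noncomm_ring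
    rw [mul_add, e1, e2, hqp]
    simp
  have := isNilpotent_add_of_mul_eq_zero hWTop hTop hW
  rwa [← hsplit] at this

end Helpers

section LemA

set_option maxHeartbeats 2000000 in
open Polynomial in
private lemma isHirano_of_isNilpotent {R : Type*} [Ring R] (m : R)
    (h : IsNilpotent (m^2 - (m^2)*(m^2))) : IsHirano m := by
  obtain ⟨n₀, hn₀⟩ := h
  set w : R := m^2 with hwdef
  have hn : (w - w^2)^(n₀+1) = 0 := by
    rw [pow_succ, show w - w^2 = w - w*w by rw [pow_two], hn₀, zero_mul]
  set I : Ideal (Polynomial ℤ) := Ideal.span {((X : Polynomial ℤ) - X^2)^(n₀+1)} with hIdef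
  let mk : Polynomial ℤ →+* Polynomial ℤ ⧸ I := Ideal.Quotient.mk I
  set ω : Polynomial ℤ ⧸ I := mk X with hω
  have hτ : (ω - ω^2)^(n₀+1) = 0 := by
    have hmem : ((X : Polynomial ℤ) - X^2)^(n₀+1) ∈ I := by
      rw [hIdef]; exact Ideal.subset_span (Set.mem_singleton _)
    have h0 : mk (((X : Polynomial ℤ) - X^2)^(n₀+1)) = 0 :=
      Ideal.Quotient.eq_zero_iff_mem.mpr hmem
    rw [map_pow, map_sub, map_pow] at h0
    exact h0
  obtain ⟨U, V, hUV⟩ : IsCoprime ((X : Polynomial ℤ)^(n₀+1)) ((1 - X)^(n₀+1)) :=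
    (show IsCoprime (X : Polynomial ℤ) (1 - X) from ⟨1, 1, by ring⟩).pow
  set u : Polynomial ℤ ⧸ I := mk U with hu
  set v : Polynomial ℤ ⧸ I := mk V with hv
  have hbez : u*ω^(n₀+1) + v*(1-ω)^(n₀+1) = 1 := by
    have := congrArg mk hUV
    simpa [map_add, map_mul, map_pow, map_sub, map_one] using this
  have hkey : ω^(n₀+1)*(1-ω)^(n₀+1) = 0 := by
    have h1 : ω^(n₀+1)*(1-ω)^(n₀+1) = (ω - ω^2)^(n₀+1) := by
      rw [← mul_pow]; congr 1; ring
    rw [h1, hτ]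
  set g : Polynomial ℤ ⧸ I := ∑ i ∈ Finset.range (n₀+1), ((1-ω)*(u*ω^(n₀+1)))^i with hg
  have hν : ((1-ω)*(u*ω^(n₀+1)))^(n₀+1) = 0 := by
    rw [mul_pow, mul_pow, pow_succ ((ω^(n₀+1))) n₀]
    rw [show (1-ω)^(n₀+1) * (u^(n₀+1) * ((ω^(n₀+1))^n₀ * ω^(n₀+1)))
        = (u^(n₀+1) * (ω^(n₀+1))^n₀) * (ω^(n₀+1)*(1-ω)^(n₀+1)) from by ring, hkey, mul_zero]
  have hG : (1 - (1-ω)*(u*ω^(n₀+1)))*g = 1 := by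
    have h2 := geom_sum_mul ((1-ω)*(u*ω^(n₀+1))) (n₀+1)
    rw [hν] at h2
    rw [hg]
    linear_combination -h2
  have hF3 : (u*ω^(n₀+1))*g*ω = u*ω^(n₀+1) := by
    linear_combination ((1-ω)*g*(u*ω^(n₀+1)))*hbez - ((1-ω)*g*(u*v))*hkey
      + (u*ω^(n₀+1))*hG
  have hG1 : ((u*ω^(n₀+1))*g)*ω*((u*ω^(n₀+1))*g) = (u*ω^(n₀+1))*g := by
    linear_combination ((u*ω^(n₀+1))*g)*hF3 + (g*(u*ω^(n₀+1)))*hbez - (g*u*v)*hkey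
  have hs : (ω*v*(1-ω)^(n₀+1))^(n₀+1) = 0 := by
    rw [mul_pow, mul_pow, pow_succ (((1-ω)^(n₀+1))) n₀]
    rw [show ω^(n₀+1)*v^(n₀+1) * (((1-ω)^(n₀+1))^n₀ * (1-ω)^(n₀+1))
        = (v^(n₀+1)*((1-ω)^(n₀+1))^n₀)*(ω^(n₀+1)*(1-ω)^(n₀+1)) from by ring, hkey, mul_zero]
  have hG2 : IsNilpotent (ω - ω*((u*ω^(n₀+1))*g)) := by
    have hωy : ω - ω*((u*ω^(n₀+1))*g) = ω - u*ω^(n₀+1) := by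
      linear_combination -hF3
    rw [hωy]
    have h2 : ω - u*ω^(n₀+1) = ω*v*(1-ω)^(n₀+1) - ((1-ω)*(u*ω^(n₀+1))) := by
      linear_combination (-ω)*hbez
    rw [h2]
    exact (Commute.all _ _).isNilpotent_sub ⟨n₀+1, hs⟩ ⟨n₀+1, hν⟩
  have hker : ∀ p ∈ I, (aeval w : Polynomial ℤ →ₐ[ℤ] R) p = 0 := by
    intro p hp
    rw [hIdef, Ideal.mem_span_singleton] at hp
    obtain ⟨c, rfl⟩ := hp
    rw [map_mul, map_pow, map_sub, aeval_X, map_pow, aeval_X, hn, zero_mul]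
  set ψ : Polynomial ℤ ⧸ I →+* R :=
    Ideal.Quotient.lift I ((aeval w : Polynomial ℤ →ₐ[ℤ] R) : Polynomial ℤ →+* R) hker with hψ
  have hψmk : ∀ p : Polynomial ℤ, ψ (mk p) = aeval w p := fun p => Ideal.Quotient.lift_mk _ _ _
  have hψω : ψ ω = w := by rw [hω, hψmk, aeval_X]
  have hcomm : ∀ s : Polynomial ℤ ⧸ I, Commute m (ψ s) := by
    intro s
    obtain ⟨p, rfl⟩ := Ideal.Quotient.mk_surjective s
    rw [hψmk]
    induction p using Polynomial.induction_on with
    | C c => rw [aeval_C]; exact (Algebra.commutes c m).symm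
    | add p q hp hq => rw [map_add]; exact hp.add_right hq
    | monomial k c hk =>
        rw [pow_succ, ← mul_assoc, map_mul, aeval_X]
        exact hk.mul_right ((Commute.refl m).pow_right 2)
  set Y : R := ψ ((u*ω^(n₀+1))*g) with hY
  have hYm : Commute m Y := hcomm _
  refine ⟨m * Y, ?_, ?_, ?_⟩
  · rw [mul_assoc, hYm.eq, ← mul_assoc]
  · have hyy : Y * (m*m) * Y = Y := by
      have hmm : ψ ((u*ω^(n₀+1))*g) * w * ψ ((u*ω^(n₀+1))*g) = ψ ((u*ω^(n₀+1))*g) := by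
        have := congrArg ψ hG1
        rw [map_mul, map_mul, hψω] at this
        exact this
      rw [← hY] at hmm
      calc Y * (m*m) * Y = Y * w * Y := by rw [hwdef, pow_two]
        _ = Y := hmm
    calc m*Y = m*(Y*(m*m)*Y) := by rw [hyy]
      _ = m*Y*m*(m*Y) := by noncomm_ring
  · have hnil := hG2.map ψ
    rw [map_sub, map_mul, hψω] at hnil
    have heq : m^2 - m*(m*Y) = w - w*Y := by
      rw [hwdef, pow_two, mul_assoc]
    rw [heq]
    exact hnil

end LemA

section MatrixHelpers
variable {A : Type*} [Ring A]

private lemma fin_two_zero : (!![0,0;0,0] : Matrix (Fin 2) (Fin 2) A) = 0 := by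
  ext i j; fin_cases i <;> fin_cases j <;> simp

private lemma fin_two_add (a₁₁ a₁₂ a₂₁ a₂₂ b₁₁ b₁₂ b₂₁ b₂₂ : A) :
    (!![a₁₁,a₁₂;a₂₁,a₂₂] + !![b₁₁,b₁₂;b₂₁,b₂₂] : Matrix (Fin 2) (Fin 2) A)
      = !![a₁₁+b₁₁, a₁₂+b₁₂; a₂₁+b₂₁, a₂₂+b₂₂] := by
  ext i j; fin_cases i <;> fin_cases j <;> simp

private lemma fin_two_sub (a₁₁ a₁₂ a₂₁ a₂₂ b₁₁ b₁₂ b₂₁ b₂₂ : A) :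
    (!![a₁₁,a₁₂;a₂₁,a₂₂] - !![b₁₁,b₁₂;b₂₁,b₂₂] : Matrix (Fin 2) (Fin 2) A)
      = !![a₁₁-b₁₁, a₁₂-b₁₂; a₂₁-b₂₁, a₂₂-b₂₂] := by
  ext i j; fin_cases i <;> fin_cases j <;> simp

private lemma diag1_pow (x : A) : ∀ k : ℕ,
    (!![x,0;0,0] : Matrix (Fin 2) (Fin 2) A)^(k+1) = !![x^(k+1),0;0,0] := by
  intro k
  induction k with
  | zero => simp
  | succ k ih =>
    rw [pow_succ, ih, Matrix.mul_fin_two, ← pow_succ]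
    simp

private lemma diag2_pow (x : A) : ∀ k : ℕ,
    (!![0,0;0,x] : Matrix (Fin 2) (Fin 2) A)^(k+1) = !![0,0;0,x^(k+1)] := by
  intro k
  induction k with
  | zero => simp
  | succ k ih =>
    rw [pow_succ, ih, Matrix.mul_fin_two, ← pow_succ]
    simp

private lemma isNilpotent_diag1 {x : A} (h : IsNilpotent x) :
    IsNilpotent (!![x,0;0,0] : Matrix (Fin 2) (Fin 2) A) := by
  obtain ⟨k, hk⟩ := h
  refine ⟨k+1, ?_⟩
  rw [diag1_pow, pow_succ, hk, zero_mul]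
  exact fin_two_zero

private lemma isNilpotent_diag2 {x : A} (h : IsNilpotent x) :
    IsNilpotent (!![0,0;0,x] : Matrix (Fin 2) (Fin 2) A) := by
  obtain ⟨k, hk⟩ := h
  refine ⟨k+1, ?_⟩
  rw [diag2_pow, pow_succ, hk, zero_mul]
  exact fin_two_zero

end MatrixHelpers

/-- If `a` is Hirano invertible, `b` is strongly Drazin invertible with strong
Drazin inverse `bD`, `bD * a = 0` and `b * a * bπ = 0` where `bπ = 1 - b * bD`,
then `!![a, 1; b, 0]` is Hirano invertible in `M₂(A)`. -/
theorem hirano_anti_triangular {A : Type*} [NormedRing A] [NormedAlgebra ℂ A]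
    [CompleteSpace A] (a b bD : A) (ha : IsHirano a) (hb : IsSDrazinInv b bD)
    (h1 : bD * a = 0) (h2 : b * a * (1 - b * bD) = 0) :
    IsHirano (!![a, 1; b, (0 : A)] : Matrix (Fin 2) (Fin 2) A) := by
  obtain ⟨x, hax, hxax, hn1⟩ := ha
  obtain ⟨hbd, hbdb, hn2⟩ := hb
  rw [pow_two] at hn1
  obtain ⟨e, hedef⟩ : ∃ e : A, e = b*bD := ⟨_, rfl⟩
  rw [← hedef] at h2 hn2
  -- scalar facts
  have hee : e*e = e := by
    rw [hedef]
    calc (b*bD)*(b*bD) = b*(bD*b*bD) := by noncomm_ring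
      _ = b*bD := by rw [← hbdb]
  have heb : e*b = b*e := by
    rw [hedef]
    calc (b*bD)*b = b*(bD*b) := by noncomm_ring
      _ = b*(b*bD) := by rw [← hbd]
  have hea : e*a = 0 := by rw [hedef, mul_assoc, h1, mul_zero]
  have hbae : b*a*e = b*a := by
    have h3 : b*a*(1 - e) = b*a - b*a*e := by noncomm_ring
    rw [h3] at h2
    exact (sub_eq_zero.mp h2).symm
  have hbaa : b*a*a = 0 := by
    rw [← hbae, mul_assoc (b*a) e a, hea, mul_zero]
  have cbe : Commute b e := heb.symm
  have ceb : Commute e b := heb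
  -- nilpotency of b - b*b and (b-b*b)*e
  have hbb : IsNilpotent (b - b*b) := by
    have hkey : (b - e)*(1 - e - b) = b - b*b - b*e + e*b + (e*e - e) := by noncomm_ring
    rw [hee, sub_self, add_zero, heb] at hkey
    have h4 : b - b*b - b*e + b*e = b - b*b := by noncomm_ring
    rw [h4] at hkey
    rw [← hkey]
    have c2 : Commute (b-e) e := Commute.sub_left cbe (Commute.refl e)
    have c3 : Commute (b-e) b := Commute.sub_left (Commute.refl b) ceb
    exact (((Commute.one_right (b-e)).sub_right c2).sub_right c3).isNilpotent_mul_right hn2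
  have hbbe : IsNilpotent ((b - b*b)*e) := by
    have c4 : Commute (b - b*b) e := Commute.sub_left cbe (cbe.mul_left cbe)
    exact c4.isNilpotent_mul_right hbb
  -- Hirano side scalar facts
  have hpp : (a*x)*(a*x) = a*x := by
    have h5 : (a*x)*(a*x) = a*(x*a*x) := by noncomm_ring
    rw [← hxax] at h5
    exact h5
  have hpa : (a*x)*a = a*(a*x) := by
    have h5 : (a*x)*a = a*(x*a) := by noncomm_ring
    rw [← hax] at h5
    exact h5
  have hpaa : (a*x)*(a*a) = (a*a)*(a*x) := by
    calc (a*x)*(a*a) = ((a*x)*a)*a := by noncomm_ring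
      _ = (a*(a*x))*a := by rw [hpa]
      _ = a*((a*x)*a) := by noncomm_ring
      _ = a*(a*(a*x)) := by rw [hpa]
      _ = (a*a)*(a*x) := by noncomm_ring
  have haa4 : IsNilpotent (a*a - (a*a)*(a*a)) := by
    have hkey : (a*a - a*x)*(1 - a*a - a*x)
        = a*a - (a*a)*(a*a) - (a*a)*(a*x) - a*x + (a*x)*(a*a) + (a*x)*(a*x) := by noncomm_ring
    rw [hpaa, hpp] at hkey
    have h6 : a*a - (a*a)*(a*a) - (a*a)*(a*x) - a*x + (a*a)*(a*x) + a*x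
        = a*a - (a*a)*(a*a) := by noncomm_ring
    rw [h6] at hkey
    rw [← hkey]
    have c1 : Commute (a*x) (a*a) := hpaa
    have c2 : Commute (a*a - a*x) (a*a) := Commute.sub_left (Commute.refl _) c1
    have c3 : Commute (a*a - a*x) (a*x) := Commute.sub_left c1.symm (Commute.refl _)
    exact (((Commute.one_right _).sub_right c2).sub_right c3).isNilpotent_mul_right hn1
  have hea2 : e*(a*a) = 0 := by rw [← mul_assoc, hea, zero_mul]
  have hea4 : e*((a*a)*(a*a)) = 0 := by rw [← mul_assoc, hea2, zero_mul]
  have hα : IsNilpotent ((a*a - (a*a)*(a*a))*(1-e)) := by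
    apply isNilpotent_swap
    have hfq : (1-e)*(a*a - (a*a)*(a*a))
        = (a*a - (a*a)*(a*a)) - (e*(a*a) - e*((a*a)*(a*a))) := by noncomm_ring
    rw [hfq, hea2, hea4, sub_zero, sub_zero]
    exact haa4
  have hn2sq : IsNilpotent ((b-e) - (b-e)*(b-e)) := by
    have h8 : (b-e) - (b-e)*(b-e) = (b-e)*(1 - (b-e)) := by noncomm_ring
    rw [h8]
    exact ((Commute.one_right _).sub_right (Commute.refl _)).isNilpotent_mul_right hn2
  have cn2e : Commute (b-e) e := Commute.sub_left cbe (Commute.refl e)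
  -- the key rewriting pipeline lemmas
  have R1' : ∀ t : A, e*(a*t) = 0 := fun t => by rw [← mul_assoc, hea, zero_mul]
  have R2 : b*(a*a) = 0 := by rw [← mul_assoc]; exact hbaa
  have R2' : ∀ t : A, b*(a*(a*t)) = 0 := fun t => by
    rw [show b*(a*(a*t)) = (b*a*a)*t by noncomm_ring, hbaa, zero_mul]
  have R3' : ∀ t : A, e*(b*t) = b*(e*t) := fun t => by rw [← mul_assoc, heb, mul_assoc]
  have R4' : ∀ t : A, e*(e*t) = e*t := fun t => by rw [← mul_assoc, hee]
  have R5 : b*(a*e) = b*a := by rw [← mul_assoc]; exact hbae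
  have R5' : ∀ t : A, b*(a*(e*t)) = b*(a*t) := fun t => by
    rw [show b*(a*(e*t)) = (b*a*e)*t by noncomm_ring, hbae, mul_assoc]
  have hkeyβ : ((b-e)*(1-e))*(1 - a*a - (b-e)) = ((b-e) - (b-e)*(b-e))*(1-e) := by
    simp only [mul_sub, sub_mul, mul_add, add_mul, mul_one, one_mul, mul_assoc,
      hea, R1', R2, R2', heb, R3', hee, R4', R5, R5', mul_zero, zero_mul,
      sub_zero, zero_sub, add_zero, zero_add]
    noncomm_ring
  have hβ : IsNilpotent ((1 - a*a - (b-e))*((b-e)*(1-e))) := by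
    apply isNilpotent_swap
    rw [hkeyβ]
    have cXe : Commute ((b-e) - (b-e)*(b-e)) e :=
      Commute.sub_left cn2e (cn2e.mul_left cn2e)
    exact ((Commute.one_right _).sub_right cXe).isNilpotent_mul_right hn2sq
  have hβα : ((1 - a*a - (b-e))*((b-e)*(1-e))) * ((a*a - (a*a)*(a*a))*(1-e)) = 0 := by
    simp only [mul_sub, sub_mul, mul_add, add_mul, mul_one, one_mul, mul_assoc,
      hea, R1', R2, R2', heb, R3', hee, R4', R5, R5', mul_zero, zero_mul,
      sub_zero, zero_sub, add_zero, zero_add]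
  have hI1 : ((1-e)*(a*a+b)*(1-e)) - ((1-e)*(a*a+b)*(1-e))*((1-e)*(a*a+b)*(1-e))
      = (a*a - (a*a)*(a*a))*(1-e) + (1 - a*a - (b-e))*((b-e)*(1-e)) := by
    simp only [mul_sub, sub_mul, mul_add, add_mul, mul_one, one_mul, mul_assoc,
      hea, R1', R2, R2', heb, R3', hee, R4', R5, R5', mul_zero, zero_mul,
      sub_zero, zero_sub, add_zero, zero_add]
    noncomm_ring
  have hI1nil : IsNilpotent (((1-e)*(a*a+b)*(1-e))
      - ((1-e)*(a*a+b)*(1-e))*((1-e)*(a*a+b)*(1-e))) := by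
    rw [hI1]
    exact isNilpotent_add_of_mul_eq_zero hβα hα hβ
  -- auxiliary scalar identities for the matrix computations
  have hff : (1-e)*(1-e) = (1:A)-e := by
    have h9 : (1-e)*(1-e) = 1 - e - e + e*e := by noncomm_ring
    rw [h9, hee]
    noncomm_ring
  have he1e : e*(1-e) = 0 := by
    have h9 : e*(1-e) = e - e*e := by noncomm_ring
    rw [h9, hee, sub_self]
  have heab : e*(a*a+b) = b*e := by rw [mul_add, hea2, zero_add, heb]
  have hbe1e : (b*e)*(1-e) = 0 := by
    have h9 : (b*e)*(1-e) = b*e - b*(e*e) := by noncomm_ring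
    rw [h9, hee, sub_self]
  have hbaf : b*a*(1-e) = 0 := by
    have h9 : b*a*(1-e) = b*a - b*a*e := by noncomm_ring
    rw [h9, hbae, sub_self]
  have heu1 : e*((1-e)*(a*a+b)*(1-e)) = 0 := by
    have h9 : e*((1-e)*(a*a+b)*(1-e)) = (e*(1-e))*((a*a+b)*(1-e)) := by noncomm_ring
    rw [h9, he1e, zero_mul]
  have hefa : e*((1-e)*a) = 0 := by
    have h9 : e*((1-e)*a) = (e*(1-e))*a := by noncomm_ring
    rw [h9, he1e, zero_mul]
  have hfu1f : (1-e)*((1-e)*(a*a+b)*(1-e))*(1-e) = (1-e)*(a*a+b)*(1-e) := by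
    have h9 : (1-e)*((1-e)*(a*a+b)*(1-e))*(1-e)
        = ((1-e)*(1-e))*(a*a+b)*((1-e)*(1-e)) := by noncomm_ring
    rw [h9, hff]
  have hbee : (b*e)*e = b*e := by rw [mul_assoc, hee]
  have hbebe : (b*e)*(b*e) = (b*b)*e := by
    calc (b*e)*(b*e) = b*(e*b)*e := by noncomm_ring
      _ = b*(b*e)*e := by rw [heb]
      _ = (b*b)*(e*e) := by noncomm_ring
      _ = (b*b)*e := by rw [hee]
  -- now the matrix part
  apply isHirano_of_isNilpotent
  have hM2 : (!![a, 1; b, (0:A)] : Matrix (Fin 2) (Fin 2) A)^2 = !![a*a+b, a; b*a, b] := by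
    rw [pow_two, Matrix.mul_fin_two]
    simp only [one_mul, mul_one, zero_mul, mul_zero, add_zero, zero_add]
  rw [hM2]
  -- outer Peirce decomposition
  have hPW : !![1-e,0;0,(1:A)] * !![a*a+b, a; b*a, b] = !![(1-e)*(a*a+b), (1-e)*a; b*a, b] := by
    rw [Matrix.mul_fin_two]
    simp only [one_mul, mul_one, zero_mul, mul_zero, add_zero, zero_add]
  have hPWP : !![1-e,0;0,(1:A)] * !![a*a+b, a; b*a, b] * !![1-e,0;0,(1:A)]
      = !![(1-e)*(a*a+b)*(1-e), (1-e)*a; 0, b] := by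
    rw [hPW, Matrix.mul_fin_two]
    simp only [one_mul, mul_one, zero_mul, mul_zero, add_zero, zero_add]
    rw [hbaf]
  have hQW : !![e,0;0,(0:A)] * !![a*a+b, a; b*a, b] = !![b*e, 0; 0, 0] := by
    rw [Matrix.mul_fin_two]
    simp only [one_mul, mul_one, zero_mul, mul_zero, add_zero, zero_add]
    rw [heab, hea]
  have hQWQ : !![e,0;0,(0:A)] * !![a*a+b, a; b*a, b] * !![e,0;0,(0:A)]
      = !![b*e, 0; 0, 0] := by
    rw [hQW, Matrix.mul_fin_two]
    simp only [one_mul, mul_one, zero_mul, mul_zero, add_zero, zero_add]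
    rw [hbee]
  apply peirce_nilpotent !![1-e,0;0,(1:A)] !![e,0;0,(0:A)]
  · -- p + q = 1
    rw [fin_two_add, Matrix.one_fin_two]
    simp
  · -- p*p = p
    rw [Matrix.mul_fin_two]
    simp only [one_mul, mul_one, zero_mul, mul_zero, add_zero, zero_add]
    rw [hff]
  · -- q*W*p = 0
    rw [hQW, Matrix.mul_fin_two]
    simp only [one_mul, mul_one, zero_mul, mul_zero, add_zero, zero_add]
    rw [hbe1e]
    exact fin_two_zero
  · -- corner p: apply inner peirce
    rw [hPWP]
    have hP'U : !![1-e,0;0,(0:A)] * !![(1-e)*(a*a+b)*(1-e), (1-e)*a; 0, b]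
        = !![(1-e)*((1-e)*(a*a+b)*(1-e)), (1-e)*((1-e)*a); 0, 0] := by
      rw [Matrix.mul_fin_two]
      simp only [one_mul, mul_one, zero_mul, mul_zero, add_zero, zero_add]
    have hQ'U : !![e,0;0,(1:A)] * !![(1-e)*(a*a+b)*(1-e), (1-e)*a; 0, b]
        = !![0, 0; 0, b] := by
      rw [Matrix.mul_fin_two]
      simp only [one_mul, mul_one, zero_mul, mul_zero, add_zero, zero_add]
      rw [heu1, hefa]
    apply peirce_nilpotent !![1-e,0;0,(0:A)] !![e,0;0,(1:A)]
    · rw [fin_two_add, Matrix.one_fin_two]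
      simp
    · rw [Matrix.mul_fin_two]
      simp only [one_mul, mul_one, zero_mul, mul_zero, add_zero, zero_add]
      rw [hff]
    · rw [hQ'U, Matrix.mul_fin_two]
      simp only [one_mul, mul_one, zero_mul, mul_zero, add_zero, zero_add]
      exact fin_two_zero
    · -- inner p-corner
      have hcorner : !![1-e,0;0,(0:A)] * !![(1-e)*(a*a+b)*(1-e), (1-e)*a; 0, b]
          * !![1-e,0;0,(0:A)] = !![(1-e)*(a*a+b)*(1-e), 0; 0, 0] := by
        rw [hP'U, Matrix.mul_fin_two]
        simp only [one_mul, mul_one, zero_mul, mul_zero, add_zero, zero_add]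
        rw [hfu1f]
      rw [hcorner, Matrix.mul_fin_two]
      simp only [one_mul, mul_one, zero_mul, mul_zero, add_zero, zero_add]
      rw [fin_two_sub]
      simp only [sub_zero]
      exact isNilpotent_diag1 hI1nil
    · -- inner q-corner
      have hcorner : !![e,0;0,(1:A)] * !![(1-e)*(a*a+b)*(1-e), (1-e)*a; 0, b]
          * !![e,0;0,(1:A)] = !![0, 0; 0, b] := by
        rw [hQ'U, Matrix.mul_fin_two]
        simp only [one_mul, mul_one, zero_mul, mul_zero, add_zero, zero_add]
      rw [hcorner, Matrix.mul_fin_two]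
      simp only [one_mul, mul_one, zero_mul, mul_zero, add_zero, zero_add]
      rw [fin_two_sub]
      simp only [sub_zero, sub_self]
      exact isNilpotent_diag2 hbb
  · -- corner q
    rw [hQWQ, Matrix.mul_fin_two]
    simp only [one_mul, mul_one, zero_mul, mul_zero, add_zero, zero_add]
    rw [hbebe, fin_two_sub]
    simp only [sub_zero, sub_self]
    rw [show b*e - (b*b)*e = (b - b*b)*e from by noncomm_ring]
    exact isNilpotent_diag1 hbbe
end

section
/- Let C be an n×n complex matrix. Then C is Hirano invertible if and only if every eigenvalue of C (equivalently, every element of the spectrum of C) belongs to the set {−1, 0, 1}. -/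
open Polynomial

theorem isNilpotent_of_isHirano {R : Type*} [Ring R] {a : R} (h : IsHirano a) :
    IsNilpotent (a - a ^ 3) := by
  obtain ⟨x, hc, hx, hN⟩ := h
  have hax : Commute a x := hc
  set e := a * x with he_def
  set N := a ^ 2 - a * x with hN_def
  have hae : Commute a e := (Commute.refl a).mul_right hax
  have haN : Commute a N := ((Commute.refl a).pow_right 2).sub_right hae
  have heN : Commute e N := (hae.symm.pow_right 2).sub_right (Commute.refl e)
  have he : e * e = e := by
    have : a * x * (a * x) = a * (x * a * x) := by noncomm_ring
    rw [he_def, this, ← hx]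
  have ha2 : a ^ 2 = e + N := by rw [hN_def]; ring_nf; noncomm_ring
  have key : a ^ 2 * (1 - e) = N * (1 - e) := by
    rw [ha2]
    have : (e + N) * (1 - e) = e - e * e + (N * (1 - e)) := by noncomm_ring
    rw [this, he, sub_self, zero_add]
  have h1e : Commute a (1 - e) := (Commute.one_right a).sub_right hae
  have hN1e : Commute N (1 - e) := (Commute.one_right N).sub_right heN.symm
  obtain ⟨k, hk⟩ := hN
  have nil1 : IsNilpotent (a * (1 - e)) := by
    refine ⟨2 * k, ?_⟩
    have sq : (a * (1 - e)) ^ 2 = a ^ 2 * ((1 - e) * (1 - e)) := by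
      rw [sq, h1e.symm.mul_mul_mul_comm, ← sq]
    have h1e_idem : (1 - e) * (1 - e) = 1 - e := by
      have : (1 - e) * (1 - e) = 1 - e - e + e * e := by noncomm_ring
      rw [this, he]; abel
    rw [pow_mul, sq, h1e_idem, key, hN1e.mul_pow, hk, zero_mul]
  have nil2 : IsNilpotent (a * N) := ⟨k, by rw [haN.mul_pow, hk, mul_zero]⟩
  have hcomm : Commute (a * (1 - e)) (a * N) :=
    Commute.mul_left ((Commute.refl a).mul_right haN) (h1e.symm.mul_right hN1e.symm)
  have decomp : a - a ^ 3 = a * (1 - e) - a * N := by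
    rw [hN_def, he_def]; noncomm_ring
  rw [decomp]
  exact hcomm.isNilpotent_sub nil1 nil2

theorem isHirano_of_isNilpotent_comm {R : Type*} [CommRing R] {a : R}
    (h : IsNilpotent (a - a ^ 3)) : IsHirano a := by
  obtain ⟨k, hk⟩ := h
  have hm : (a - a ^ 3) ^ (k + 1) = 0 := by rw [pow_succ, hk, zero_mul]
  have hwex : ∀ j : ℕ, ∃ w : R, (1 - a ^ 2) ^ j = 1 - a ^ 2 * w := by
    intro j
    induction j with
    | zero => exact ⟨0, by ring⟩
    | succ j ih =>
      obtain ⟨w, hw⟩ := ih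
      exact ⟨w + 1 - a ^ 2 * w, by rw [pow_succ, hw]; ring⟩
  obtain ⟨w, hw⟩ := hwex (k + 1)
  have key0 : a ^ (k + 1) * (1 - a ^ 2 * w) = 0 := by
    rw [← hw, ← mul_pow]
    have : a * (1 - a ^ 2) = a - a ^ 3 := by ring
    rw [this, hm]
  have key : a ^ (k + 1) = a ^ (k + 3) * w := by
    have h1 : a ^ (k + 1) - a ^ (k + 3) * w = 0 := by rw [← key0]; ring
    linear_combination h1
  have fact : ∀ j : ℕ, a ^ (k + 1) = a ^ (k + 1 + 2 * j) * w ^ j := by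
    intro j
    induction j with
    | zero => simp
    | succ j ih =>
      calc a ^ (k + 1) = a ^ (k + 3) * w := key
        _ = a ^ (k + 1) * (a ^ 2 * w) := by ring
        _ = a ^ (k + 1 + 2 * j) * w ^ j * (a ^ 2 * w) := by rw [← ih]
        _ = a ^ (k + 1 + 2 * (j + 1)) * w ^ (j + 1) := by ring
  have hfm : a ^ (k + 1) = a ^ (3 * (k + 1)) * w ^ (k + 1) := by
    have h := fact (k + 1)
    have he : k + 1 + 2 * (k + 1) = 3 * (k + 1) := by ring
    rwa [he] at h
  set x : R := a ^ (2 * k + 1) * w ^ (k + 1) with hx_def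
  set e : R := a ^ (2 * (k + 1)) * w ^ (k + 1) with he_def
  have hax : a * x = e := by rw [hx_def, he_def]; ring
  have hee : e * e = e := by
    calc e * e = (a ^ (3 * (k + 1)) * w ^ (k + 1)) * (a ^ (k + 1) * w ^ (k + 1)) := by
          rw [he_def]; ring
      _ = a ^ (k + 1) * (a ^ (k + 1) * w ^ (k + 1)) := by rw [← hfm]
      _ = e := by rw [he_def]; ring
  refine ⟨x, mul_comm _ _, ?_, ?_⟩
  · calc x = a ^ (2 * k + 1) * w ^ (k + 1) := hx_def
      _ = a ^ k * a ^ (k + 1) * w ^ (k + 1) := by ring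
      _ = a ^ k * (a ^ (3 * (k + 1)) * w ^ (k + 1)) * w ^ (k + 1) := by rw [← hfm]
      _ = x * a * x := by rw [hx_def]; ring
  · have he1 : a ^ (2 * (k + 1)) * e = a ^ (2 * (k + 1)) := by
      calc a ^ (2 * (k + 1)) * e = (a ^ (3 * (k + 1)) * w ^ (k + 1)) * a ^ (k + 1) := by
            rw [he_def]; ring
        _ = a ^ (k + 1) * a ^ (k + 1) := by rw [← hfm]
        _ = a ^ (2 * (k + 1)) := by ring
    have he2 : a ^ 2 * w * e = e := by
      calc a ^ 2 * w * e = (a ^ (k + 3) * w) * a ^ (k + 1) * w ^ (k + 1) := by rw [he_def]; ring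
        _ = a ^ (k + 1) * a ^ (k + 1) * w ^ (k + 1) := by rw [← key]
        _ = e := by rw [he_def]; ring
    have hIe : IsIdempotentElem e := hee
    have hI1e : IsIdempotentElem (1 - e) := hIe.one_sub
    have nil1 : IsNilpotent (a ^ 2 * (1 - e)) := by
      refine ⟨k + 1, ?_⟩
      rw [mul_pow, hI1e.pow_succ_eq k, ← pow_mul, mul_comm 2 (k + 1), mul_comm (k + 1) 2,
        mul_sub, mul_one, he1, sub_self]
    have nil2 : IsNilpotent ((1 - a ^ 2) * e) := by
      refine ⟨k + 1, ?_⟩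
      rw [mul_pow, hIe.pow_succ_eq k, hw, sub_mul, one_mul, he2, sub_self]
    have nilsum : IsNilpotent (a ^ 2 * (1 - e) - (1 - a ^ 2) * e) :=
      (Commute.all _ _).isNilpotent_sub nil1 nil2
    have hd : a ^ 2 - a * x = a ^ 2 * (1 - e) - (1 - a ^ 2) * e := by rw [hax]; ring
    rw [hd]
    exact nilsum

theorem spectrum_zero_of_isNilpotent {A : Type*} [Ring A] [Algebra ℂ A]
    {q : A} (hq : IsNilpotent q) {ν : ℂ} (hν : ν ∈ spectrum ℂ q) : ν = 0 := by
  by_contra hne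
  rw [spectrum.mem_iff] at hν
  apply hν
  have h1 : algebraMap ℂ A ν - q = algebraMap ℂ A ν * (1 - algebraMap ℂ A ν⁻¹ * q) := by
    rw [mul_sub, mul_one, ← mul_assoc, ← map_mul, mul_inv_cancel₀ hne, map_one, one_mul]
  rw [h1]
  have hcomm : Commute (algebraMap ℂ A ν⁻¹) q := Algebra.commute_algebraMap_left ν⁻¹ q
  exact ((algebraMap ℂ A).isUnit_map (isUnit_iff_ne_zero.mpr hne)).mul
    (IsNilpotent.isUnit_one_sub (hcomm.isNilpotent_mul_left hq))

theorem end_isNilpotent_of_spectrum {V : Type*} [AddCommGroup V] [Module ℂ V]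
    [FiniteDimensional ℂ V] (φ : Module.End ℂ V)
    (h : ∀ ν ∈ spectrum ℂ φ, ν = 0) : IsNilpotent φ := by
  have hint : IsIntegral ℂ φ := Algebra.IsIntegral.isIntegral φ
  have hmon : (minpoly ℂ φ).Monic := minpoly.monic hint
  have hsplit : (minpoly ℂ φ).Splits := IsAlgClosed.splits _
  have hroots : ∀ r ∈ (minpoly ℂ φ).roots, r = 0 := by
    intro r hr
    have hroot : (minpoly ℂ φ).IsRoot r := isRoot_of_mem_roots hr
    have hev : Module.End.HasEigenvalue φ r := Module.End.hasEigenvalue_iff_isRoot.mpr hroot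
    exact h r hev.mem_spectrum
  have heq : minpoly ℂ φ = X ^ (minpoly ℂ φ).natDegree := by
    conv_lhs => rw [hsplit.eq_prod_roots_of_monic hmon]
    have : (minpoly ℂ φ).roots.map (fun a => X - C a) =
        (minpoly ℂ φ).roots.map (fun _ => (X : ℂ[X])) := by
      apply Multiset.map_congr rfl
      intro r hr
      rw [hroots r hr, map_zero, sub_zero]
    rw [this, Multiset.map_const', Multiset.prod_replicate]
    congr 1
    have := hsplit.natDegree_eq_card_roots
    omega
  refine ⟨(minpoly ℂ φ).natDegree, ?_⟩
  have := minpoly.aeval ℂ φ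
  rw [heq] at this
  simpa using this

/-- A complex `n × n` matrix is Hirano invertible iff all its eigenvalues
(i.e. all elements of its spectrum) lie in `{-1, 0, 1}`. -/
theorem hirano_iff_eigenvalues {n : ℕ} (C : Matrix (Fin n) (Fin n) ℂ) :
    IsHirano C ↔ ∀ μ ∈ spectrum ℂ C, μ = -1 ∨ μ = 0 ∨ μ = 1 := by
  have haev : aeval C ((X : ℂ[X]) - X ^ 3) = C - C ^ 3 := by
    simp [map_sub, aeval_X, map_pow]
  constructor
  · intro h μ hμ
    have hnil : IsNilpotent (C - C ^ 3) := isNilpotent_of_isHirano h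
    have hmem : eval μ ((X : ℂ[X]) - X ^ 3) ∈ spectrum ℂ (aeval C ((X : ℂ[X]) - X ^ 3)) :=
      spectrum.subset_polynomial_aeval C _ ⟨μ, hμ, rfl⟩
    rw [haev] at hmem
    have h0 : μ - μ ^ 3 = 0 := by
      have := spectrum_zero_of_isNilpotent hnil hmem
      simpa using this
    have hfac : μ * (1 - μ) * (1 + μ) = 0 := by linear_combination h0
    rcases mul_eq_zero.mp hfac with h1 | h1
    · rcases mul_eq_zero.mp h1 with h2 | h2
      · exact Or.inr (Or.inl h2)
      · exact Or.inr (Or.inr (by linear_combination -h2))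
    · exact Or.inl (by linear_combination h1)
  · intro h
    -- first: C - C^3 is nilpotent
    have hnil : IsNilpotent (C - C ^ 3) := by
      rcases Nat.eq_zero_or_pos n with hn | hn
      · subst hn
        exact ⟨1, Subsingleton.elim _ _⟩
      · haveI : NeZero n := ⟨hn.ne'⟩
        have hdeg : 0 < ((X : ℂ[X]) - X ^ 3).degree := by
          have h3 : ((X : ℂ[X]) - X ^ 3).degree = 3 := by compute_degree!
          rw [h3]
          norm_num
        have hspec : ∀ ν ∈ spectrum ℂ (C - C ^ 3), ν = 0 := by
          intro ν hν
          rw [← haev, spectrum.map_polynomial_aeval_of_degree_pos C _ hdeg] at hν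
          obtain ⟨μ, hμ, rfl⟩ := hν
          rcases h μ hμ with h1 | h1 | h1 <;> subst h1 <;> norm_num
        -- transfer to endomorphisms
        set eqv := Matrix.toLinAlgEquiv (Pi.basisFun ℂ (Fin n))
        have hφ : IsNilpotent (eqv (C - C ^ 3)) := by
          apply end_isNilpotent_of_spectrum
          intro ν hν
          rw [AlgEquiv.spectrum_eq] at hν
          exact hspec ν hν
        have := hφ.map (eqv.symm : Module.End ℂ (Fin n → ℂ) →ₐ[ℂ] Matrix (Fin n) (Fin n) ℂ)
        simpa using this
    -- now use the commutative subalgebra generated by C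
    set S := Algebra.adjoin ℂ ({C} : Set (Matrix (Fin n) (Fin n) ℂ)) with hS
    letI : CommRing S := Algebra.adjoinCommRingOfComm ℂ (by
      rintro a ha b hb
      rw [Set.mem_singleton_iff] at ha hb
      subst ha; subst hb; rfl)
    set a : S := ⟨C, Algebra.subset_adjoin rfl⟩ with ha_def
    have hnil' : IsNilpotent (a - a ^ 3) := by
      obtain ⟨k, hk⟩ := hnil
      refine ⟨k, Subtype.ext ?_⟩
      push_cast
      exact hk
    obtain ⟨x, h1, h2, h3⟩ := isHirano_of_isNilpotent_comm hnil'
    refine ⟨x.1, ?_, ?_, ?_⟩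
    · have := congrArg Subtype.val h1
      push_cast at this
      exact this
    · have := congrArg Subtype.val h2
      push_cast at this
      exact this
    · have := h3.map S.val
      have hval : S.val (a ^ 2 - a * x) = C ^ 2 - C * x.1 := rfl
      rwa [hval] at this
end

section
/- Let A and B be n×n complex matrices. Suppose B is strongly Drazin invertible with strongly Drazin inverse B^D, and B^D A = 0, B A B^π = 0 (where B^π = I − BB^D), and every eigenvalue of A and every eigenvalue of B lies in {0, 1}. Then the 2n×2n block matrix M with blocks (A, I) in the first block row and (B, 0) in the second block row is Hirano invertible. -/
open Polynomial

/-- If `a - a^3` is nilpotent in a complex algebra, then `a` is Hirano invertible. -/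
lemma hirano_of_nilpotent {R : Type*} [Ring R] [Algebra ℂ R] (a : R)
    (h : IsNilpotent (a - a ^ 3)) : IsHirano a := by
  obtain ⟨m, hm⟩ := h
  have hco : IsCoprime ((X : ℂ[X]) ^ 2) (1 - X ^ 2) := ⟨1, 1, by ring⟩
  obtain ⟨p, q, hpq⟩ := hco.pow (m := m + 1) (n := m + 1)
  have hσ : (∑ i ∈ Finset.range (m + 1), ((1 : ℂ[X]) - X ^ 2) ^ i) * X ^ 2
      = 1 - (1 - X ^ 2) ^ (m + 1) := by
    linear_combination -(geom_sum_mul (1 - (X : ℂ[X]) ^ 2) (m + 1))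
  set σ : ℂ[X] := ∑ i ∈ Finset.range (m + 1), ((1 : ℂ[X]) - X ^ 2) ^ i with hσdef
  have hg0 : (Polynomial.aeval a) (((X : ℂ[X]) ^ 2) ^ (m + 1) * (1 - X ^ 2) ^ (m + 1)) = 0 := by
    have hid : (((X : ℂ[X]) ^ 2) ^ (m + 1) * (1 - X ^ 2) ^ (m + 1))
        = (X ^ (m + 1)) * ((X - X ^ 3) ^ m * (X - X ^ 3)) := by
      rw [← mul_pow, ← pow_succ, ← mul_pow]
      congr 1
      ring
    rw [hid]
    simp only [map_mul, map_pow, map_sub, aeval_X]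
    rw [hm]
    simp
  set ξ : ℂ[X] := X * σ * (p * ((X : ℂ[X]) ^ 2) ^ (m + 1)) with hξdef
  have hmulX : ∀ r : ℂ[X], (Polynomial.aeval a) (X * r) = a * (Polynomial.aeval a) r := by
    intro r; rw [map_mul, aeval_X]
  have hXmul : ∀ r : ℂ[X], (Polynomial.aeval a) (r * X) = (Polynomial.aeval a) r * a := by
    intro r; rw [map_mul, aeval_X]
  have hX2 : (Polynomial.aeval a) ((X : ℂ[X]) ^ 2) = a ^ 2 := by
    rw [map_pow, aeval_X]
  refine ⟨(Polynomial.aeval a) ξ, ?_, ?_, ?_⟩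
  · calc a * (Polynomial.aeval a) ξ = (Polynomial.aeval a) (X * ξ) := (hmulX ξ).symm
      _ = (Polynomial.aeval a) (ξ * X) := congrArg _ (mul_comm X ξ)
      _ = (Polynomial.aeval a) ξ * a := hXmul ξ
  · have hkey : ξ * X * ξ - ξ
        = (-(X * σ * p * (q + p * ((X : ℂ[X]) ^ 2) ^ (m + 1))))
          * (((X : ℂ[X]) ^ 2) ^ (m + 1) * (1 - X ^ 2) ^ (m + 1)) := by
      rw [hξdef]
      linear_combination (X * σ * p ^ 2 * (((X : ℂ[X]) ^ 2) ^ (m + 1)) ^ 2) * hσ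
        + (X * σ * p * ((X : ℂ[X]) ^ 2) ^ (m + 1)) * hpq
    have hz : (Polynomial.aeval a) (ξ * X * ξ) - (Polynomial.aeval a) ξ = 0 := by
      rw [← map_sub, hkey, map_mul, hg0, mul_zero]
    have h2 : (Polynomial.aeval a) (ξ * X * ξ) = (Polynomial.aeval a) ξ := by
      exact sub_eq_zero.mp hz
    calc (Polynomial.aeval a) ξ = (Polynomial.aeval a) (ξ * X * ξ) := h2.symm
      _ = (Polynomial.aeval a) (ξ * X) * (Polynomial.aeval a) ξ := map_mul _ _ _
      _ = (Polynomial.aeval a) ξ * a * (Polynomial.aeval a) ξ := by rw [hXmul ξ]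
  · set d : ℂ[X] := X ^ 2 - X * ξ with hddef
    have had : a ^ 2 - a * (Polynomial.aeval a) ξ = (Polynomial.aeval a) d := by
      rw [hddef, map_sub, hX2, hmulX ξ]
    have hdvd1 : d ^ (m + 1)
        = ((X : ℂ[X]) ^ 2) ^ (m + 1) * (1 - σ * (p * ((X : ℂ[X]) ^ 2) ^ (m + 1))) ^ (m + 1) := by
      rw [← mul_pow]
      congr 1
      rw [hddef, hξdef]
      ring
    have hdvd2 : ((1 : ℂ[X]) - X ^ 2) ∣ d := by
      refine ⟨-1 + (q + p * ((X : ℂ[X]) ^ 2) ^ (m + 1)) * (1 - X ^ 2) ^ m, ?_⟩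
      rw [hddef, hξdef]
      linear_combination (-(p * ((X : ℂ[X]) ^ 2) ^ (m + 1))) * hσ - hpq
    obtain ⟨c2, hc2⟩ := pow_dvd_pow_of_dvd hdvd2 (m + 1)
    refine ⟨2 * (m + 1), ?_⟩
    rw [had, ← map_pow]
    have hdd : d ^ (2 * (m + 1))
        = (((X : ℂ[X]) ^ 2) ^ (m + 1) * (1 - X ^ 2) ^ (m + 1))
          * ((1 - σ * (p * ((X : ℂ[X]) ^ 2) ^ (m + 1))) ^ (m + 1) * c2) := by
      have h2m : d ^ (2 * (m + 1)) = d ^ (m + 1) * d ^ (m + 1) := by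
        rw [two_mul, pow_add]
      rw [h2m]
      nth_rewrite 2 [hc2]
      rw [hdvd1]
      ring
    rw [hdd, map_mul, hg0, zero_mul]

/-- Spectrum membership for matrices in terms of eigenvectors. -/
lemma matrix_mem_spectrum_iff {m : Type*} [Fintype m] [DecidableEq m]
    (C : Matrix m m ℂ) (μ : ℂ) :
    μ ∈ spectrum ℂ C ↔ ∃ v : m → ℂ, v ≠ 0 ∧ C.mulVec v = μ • v := by
  rw [spectrum.mem_iff, Matrix.isUnit_iff_isUnit_det, isUnit_iff_ne_zero, not_not,
    ← Matrix.exists_mulVec_eq_zero_iff]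
  constructor
  · rintro ⟨v, hv, h⟩
    refine ⟨v, hv, ?_⟩
    rw [Algebra.algebraMap_eq_smul_one, Matrix.sub_mulVec, Matrix.smul_mulVec,
      Matrix.one_mulVec] at h
    exact (sub_eq_zero.mp h).symm
  · rintro ⟨v, hv, h⟩
    exact ⟨v, hv, by
      rw [Algebra.algebraMap_eq_smul_one, Matrix.sub_mulVec, Matrix.smul_mulVec,
        Matrix.one_mulVec, h, sub_self]⟩

/-- A complex matrix whose spectrum is contained in `{0}` is nilpotent. -/
lemma matrix_isNilpotent_of_spectrum {m : Type*} [Fintype m] [DecidableEq m]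
    (N : Matrix m m ℂ) (h : ∀ μ ∈ spectrum ℂ N, μ = 0) : IsNilpotent N := by
  let e := Matrix.toLinAlgEquiv (Pi.basisFun ℂ m)
  have hs : spectrum ℂ (e N) = spectrum ℂ N := AlgEquiv.spectrum_eq e N
  suffices hn : IsNilpotent (e N) by
    have := hn.map e.symm
    simpa using this
  set f := e N with hf
  have hroot : ∀ μ : ℂ, (minpoly ℂ f).IsRoot μ → μ = 0 := by
    intro μ hμ
    have h1 : Module.End.HasEigenvalue f μ := Module.End.hasEigenvalue_iff_isRoot.mpr hμ
    have h2 : μ ∈ spectrum ℂ f := Module.End.hasEigenvalue_iff_mem_spectrum.mp h1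
    exact h μ (hs ▸ h2)
  have hint : IsIntegral ℂ f := Algebra.IsIntegral.isIntegral f
  have hmo : (minpoly ℂ f).Monic := minpoly.monic hint
  have hsp : (minpoly ℂ f).Splits := IsAlgClosed.splits _
  have hp : minpoly ℂ f = X ^ (minpoly ℂ f).natDegree := by
    have hcard : (minpoly ℂ f).roots.card = (minpoly ℂ f).natDegree := by
      rw [hsp.natDegree_eq_card_roots]
    have hrep : (minpoly ℂ f).roots
        = Multiset.replicate (minpoly ℂ f).roots.card 0 := by
      rw [Multiset.eq_replicate_card]
      intro b hb
      exact hroot b (isRoot_of_mem_roots hb)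
    conv_lhs => rw [hsp.eq_prod_roots_of_monic hmo]
    rw [hrep, Multiset.map_replicate, Multiset.prod_replicate, hcard]
    simp
  refine ⟨(minpoly ℂ f).natDegree, ?_⟩
  have h0 := minpoly.aeval ℂ f
  rw [hp, map_pow, aeval_X] at h0
  exact h0

/-- If `B` is strongly Drazin invertible with strong Drazin inverse `BD`,
`BD * A = 0`, `B * A * Bπ = 0` (with `Bπ = 1 - B * BD`), and all eigenvalues of
`A` and of `B` lie in `{0, 1}`, then the `2n × 2n` block matrix
`[[A, I], [B, 0]]` is Hirano invertible. -/
theorem hirano_block_anti_triangular {n : ℕ} (A B BD : Matrix (Fin n) (Fin n) ℂ)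
    (hB : IsSDrazinInv B BD) (h1 : BD * A = 0) (h2 : B * A * (1 - B * BD) = 0)
    (hA_eig : ∀ μ ∈ spectrum ℂ A, μ = 0 ∨ μ = 1)
    (hB_eig : ∀ μ ∈ spectrum ℂ B, μ = 0 ∨ μ = 1) :
    IsHirano (Matrix.fromBlocks A 1 B (0 : Matrix (Fin n) (Fin n) ℂ)) := by
  set M := Matrix.fromBlocks A 1 B (0 : Matrix (Fin n) (Fin n) ℂ) with hMdef
  have hspec : ∀ lam ∈ spectrum ℂ M, lam ^ 3 = lam := by
    intro lam hlam
    obtain ⟨v, hv, hmv⟩ := (matrix_mem_spectrum_iff M lam).mp hlam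
    by_cases hl0 : lam = 0
    · simp [hl0]
    rw [hMdef, Matrix.fromBlocks_mulVec] at hmv
    set x : Fin n → ℂ := v ∘ Sum.inl with hxdef
    set y : Fin n → ℂ := v ∘ Sum.inr with hydef
    have eq1 : A.mulVec x + Matrix.mulVec 1 y = lam • x := by
      funext i; exact congrFun hmv (Sum.inl i)
    have eq2 : B.mulVec x + Matrix.mulVec 0 y = lam • y := by
      funext i; exact congrFun hmv (Sum.inr i)
    rw [Matrix.one_mulVec] at eq1
    rw [Matrix.zero_mulVec, add_zero] at eq2
    have hx0 : x ≠ 0 := by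
      intro hx
      apply hv
      have hy0 : y = 0 := by
        rw [hx] at eq1
        simpa using eq1
      funext i
      cases i with
      | inl i => exact congrFun hx i
      | inr i => exact congrFun hy0 i
    have hyx : y = lam • x - A.mulVec x := by
      rw [← eq1]; abel
    have key : B.mulVec x = (lam ^ 2) • x - lam • A.mulVec x := by
      rw [eq2, hyx, smul_sub, smul_smul, ← pow_two]
    have hB2 : ∀ w : Fin n → ℂ, w ≠ 0 → B.mulVec w = (lam ^ 2) • w → lam ^ 3 = lam := by
      intro w hw hwe
      have hmem : lam ^ 2 ∈ spectrum ℂ B := (matrix_mem_spectrum_iff B _).mpr ⟨w, hw, hwe⟩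
      rcases hB_eig _ hmem with hc | hc
      · exact absurd ((pow_eq_zero_iff (by norm_num : (2:ℕ) ≠ 0)).mp hc) hl0
      · calc lam ^ 3 = lam ^ 2 * lam := by ring
          _ = lam := by rw [hc, one_mul]
    set E : Matrix (Fin n) (Fin n) ℂ := B * BD with hEdef
    have heA : E * A = 0 := by rw [hEdef, mul_assoc, h1, mul_zero]
    have heB : E * B = B * E := by
      rw [hEdef, mul_assoc, ← hB.1, ← mul_assoc]
    by_cases hz : E.mulVec x = 0
    · have hBA : (B * A).mulVec x = 0 := by
        have hsplitBA : B * A = B * A * (1 - E) + B * A * E := by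
          rw [mul_sub, mul_one]; abel
        rw [hsplitBA, Matrix.add_mulVec, hEdef, h2, Matrix.zero_mulVec, zero_add,
          ← Matrix.mulVec_mulVec, ← hEdef, hz, Matrix.mulVec_zero]
      have ht : B.mulVec (B.mulVec x) = (lam ^ 2) • (B.mulVec x) := by
        calc B.mulVec (B.mulVec x) = B.mulVec ((lam ^ 2) • x - lam • A.mulVec x) := by
              rw [← key]
          _ = (lam ^ 2) • B.mulVec x - lam • (B * A).mulVec x := by
              rw [Matrix.mulVec_sub, Matrix.mulVec_smul, Matrix.mulVec_smul,
                Matrix.mulVec_mulVec]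
          _ = (lam ^ 2) • B.mulVec x := by rw [hBA, smul_zero, sub_zero]
      by_cases ht0 : B.mulVec x = 0
      · have hAx : A.mulVec x = lam • x := by
          have hkey0 : (0 : Fin n → ℂ) = (lam ^ 2) • x - lam • A.mulVec x := by
            rw [← ht0, key]
          have hlx : lam • A.mulVec x = lam • (lam • x) := by
            have hss := sub_eq_zero.mp hkey0.symm
            rw [← hss, smul_smul, ← pow_two]
          exact smul_right_injective _ hl0 hlx
        have hmem : lam ∈ spectrum ℂ A := (matrix_mem_spectrum_iff A _).mpr ⟨x, hx0, hAx⟩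
        rcases hA_eig _ hmem with hc | hc
        · exact absurd hc hl0
        · rw [hc]; norm_num
      · exact hB2 (B.mulVec x) ht0 ht
    · have h4 : E.mulVec (A.mulVec x) = 0 := by
        rw [Matrix.mulVec_mulVec, heA, Matrix.zero_mulVec]
      have h5 : E.mulVec (B.mulVec x) = B.mulVec (E.mulVec x) := by
        rw [Matrix.mulVec_mulVec, heB, ← Matrix.mulVec_mulVec]
      have h3 : E.mulVec (B.mulVec x) = (lam ^ 2) • (E.mulVec x) - lam • E.mulVec (A.mulVec x) := by
        rw [key, Matrix.mulVec_sub, Matrix.mulVec_smul, Matrix.mulVec_smul]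
      rw [h5, h4, smul_zero, sub_zero] at h3
      exact hB2 (E.mulVec x) hz h3
  have haev : (Polynomial.aeval M) ((X : ℂ[X]) ^ 3 - X) = M ^ 3 - M := by
    simp
  have hdeg : 0 < ((X : ℂ[X]) ^ 3 - X).degree := by
    have h3 : ((X : ℂ[X]) ^ 3).degree = 3 := degree_X_pow 3
    have h1' : ((X : ℂ[X])).degree = 1 := degree_X
    have : ((X : ℂ[X]) ^ 3 - X).degree = 3 := by
      rw [degree_sub_eq_left_of_degree_lt]
      · exact h3
      · rw [h3, h1']; decide
    rw [this]; decide
  have hps := spectrum.map_polynomial_aeval_of_degree_pos M ((X : ℂ[X]) ^ 3 - X) hdeg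
  have hnil : IsNilpotent (M ^ 3 - M) := by
    apply matrix_isNilpotent_of_spectrum
    intro μ hμ
    rw [← haev] at hμ
    rw [hps] at hμ
    obtain ⟨k, hk, hkeq⟩ := hμ
    have := hspec k hk
    simp only [eval_sub, eval_pow, eval_X] at hkeq
    rw [← hkeq, this, sub_self]
  have hnil' : IsNilpotent (M - M ^ 3) := by
    simpa [neg_sub] using hnil.neg
  exact hirano_of_nilpotent M hnil'
end
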